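/- Let $\mu, \alpha > 0$ with $\kappa = \alpha/\mu \geq 1$, $\eta = 1/\alpha$, and $\beta = (1 - \frac{1}{2\sqrt{\kappa}})^2$. Then the constant $C_0 = \frac{\sqrt{2}(\beta+1)}{\sqrt{\min\{h(\beta,\eta\mu), h(\beta,\eta\alpha)\}}}$ satisfies $C_0 \leq \max\{4, 2\sqrt{\kappa}\} \leq 4\sqrt{\kappa}$, where $h(\beta,z) = -(\beta-(1-\sqrt{z})^2)(\beta-(1+\sqrt{z})^2)$. -/

import Mathlib

/-- The auxiliary function `h(β,z) = -(β-(1-√z)²)(β-(1+√z)²)`. -/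
noncomputable def hfun (β z : ℝ) : ℝ :=
  -((β - (1 - Real.sqrt z) ^ 2) * (β - (1 + Real.sqrt z) ^ 2))

/-- Corollary 1: with `η = 1/α` and `β = (1 - 1/(2√κ))²` where `κ = α/μ ≥ 1`, the constant
`C₀ = √2(β+1)/√(min{h(β,ημ), h(β,ηα)})` satisfies `C₀ ≤ max{4, 2√κ} ≤ 4√κ`. -/
theorem C0_le_four_sqrt_kappa (μ α η β : ℝ) (hμ : 0 < μ) (hα : 0 < α) (hκ : 1 ≤ α / μ)
    (hη : η = 1 / α) (hβ : β = (1 - 1 / (2 * Real.sqrt (α / μ))) ^ 2) :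
    Real.sqrt 2 * (β + 1) / Real.sqrt (min (hfun β (η * μ)) (hfun β (η * α)))
      ≤ max 4 (2 * Real.sqrt (α / μ)) ∧
    max 4 (2 * Real.sqrt (α / μ)) ≤ 4 * Real.sqrt (α / μ) := by
  have hκpos : (0:ℝ) < α / μ := div_pos hα hμ
  set s := Real.sqrt (α / μ) with hsdef
  have hs1 : 1 ≤ s := by
    rw [hsdef, show (1:ℝ) = Real.sqrt 1 by simp]
    exact Real.sqrt_le_sqrt hκ
  have hs0 : (0:ℝ) < s := lt_of_lt_of_le one_pos hs1
  have hs2 : s ^ 2 = α / μ := Real.sq_sqrt hκpos.le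
  set t := 1 / s with htdef
  have ht0 : 0 < t := by positivity
  have ht1 : t ≤ 1 := by
    rw [htdef]
    exact div_le_one_of_le₀ hs1 hs0.le
  have hst : s * t = 1 := by
    rw [htdef]; field_simp
  have hβ' : β = (1 - t/2)^2 := by
    rw [hβ, htdef]; field_simp
  have hβpos : 0 < β := by
    rw [hβ']; nlinarith
  have hημ : η * μ = t^2 := by
    rw [hη, htdef]
    field_simp
    rw [hs2]
    field_simp
  have hsqημ : Real.sqrt (η * μ) = t := by
    rw [hημ, Real.sqrt_sq ht0.le]
  have hηα : η * α = 1 := by rw [hη]; field_simp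
  -- closed forms for the two h values
  have h1eq : hfun β (η * μ) = 3*t^2*(1 - 3*t/4)*(1 + t/4) := by
    rw [hfun, hsqημ, hβ']; ring
  have h2eq : hfun β (η * α) = β * (4 - β) := by
    rw [hfun, hηα, Real.sqrt_one]; ring
  have h1pos : 0 < hfun β (η * μ) := by
    rw [h1eq]
    have := mul_pos (mul_pos (show (0:ℝ) < 3*t^2 by positivity)
      (show (0:ℝ) < 1 - 3*t/4 by linarith)) (show (0:ℝ) < 1 + t/4 by linarith)
    linarith
  have h2pos : 0 < hfun β (η * α) := by
    rw [h2eq, hβ']; nlinarith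
  -- key polynomial bounds
  have keyA : 2 * (β + 1)^2 ≤ 16 * hfun β (η * α) := by
    rw [h2eq, hβ']; nlinarith [sq_nonneg t, sq_nonneg (t-1), sq_nonneg (t+1)]
  have keyB : 2 * (β + 1)^2 ≤ (2*s)^2 * hfun β (η * μ) := by
    have hs2t : (2*s)^2 * hfun β (η * μ) = 12*(1 - 3*t/4)*(1 + t/4) := by
      rw [h1eq]
      linear_combination (12*(1 - 3*t/4)*(1 + t/4)*(s*t+1)) * hst
    rw [hs2t, hβ']
    nlinarith [mul_nonneg (sub_nonneg.mpr ht1) (sq_nonneg t),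
      mul_nonneg (mul_nonneg (sub_nonneg.mpr ht1) ht0.le) (sq_nonneg t), sq_nonneg (1-t)]
  -- generic step: from 2(β+1)² ≤ c²·h with c,h > 0, get √2(β+1)/√h ≤ c
  have step : ∀ c h : ℝ, 0 < c → 0 < h → 2 * (β + 1)^2 ≤ c^2 * h →
      Real.sqrt 2 * (β + 1) / Real.sqrt h ≤ c := by
    intro c h hc hh hle
    rw [div_le_iff₀ (Real.sqrt_pos.mpr hh)]
    have l1 : Real.sqrt 2 * (β + 1) = Real.sqrt (2 * (β + 1)^2) := by
      rw [Real.sqrt_mul (by norm_num), Real.sqrt_sq (by positivity)]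
    have l2 : c * Real.sqrt h = Real.sqrt (c^2 * h) := by
      rw [Real.sqrt_mul (by positivity), Real.sqrt_sq hc.le]
    rw [l1, l2]
    exact Real.sqrt_le_sqrt hle
  constructor
  · rcases le_total (hfun β (η * μ)) (hfun β (η * α)) with hmin | hmin
    · rw [min_eq_left hmin]
      exact le_trans (step (2*s) _ (by positivity) h1pos keyB) (le_max_right _ _)
    · rw [min_eq_right hmin]
      refine le_trans (step 4 _ (by norm_num) h2pos ?_) (le_max_left _ _)
      calc 2 * (β + 1)^2 ≤ 16 * hfun β (η * α) := keyA
        _ = 4^2 * hfun β (η * α) := by ring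
  · apply max_le <;> linarith
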